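/- Let H and H' be real Hilbert spaces, (e_γ)_{γ∈Γ} an orthonormal (Hilbert) basis of H indexed by a countable set Γ, K : H → H' a bounded linear operator, (w_γ)_{γ∈Γ} weights with w_γ ≥ c for a fixed c > 0, and (p_γ)_{γ∈Γ} exponents with 1 ≤ p_γ ≤ 2; define the penalty N(f) = Σ_γ w_γ |⟨f, e_γ⟩|^{p_γ} ∈ [0, ∞]. Let f₀ ∈ H and S = { f ∈ H : K f = K f₀ }. Assume either (a) K is injective, or (b) p_γ > 1 for every γ ∈ Γ and there exists some f ∈ S with N(f) < ∞. Then there is a unique element f† ∈ S that is minimal with respect to N, i.e. N(f†) ≤ N(f) for all f ∈ S, and any other element of S with this property equals f†. -/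

import Mathlib

set_option linter.unusedSectionVars false
set_option maxHeartbeats 1000000

open scoped RealInnerProductSpace ENNReal
open Filter Topology

section AuxLemmas

private lemma aux_mid_le {p : ℝ} (hp : 1 ≤ p) (x y : ℝ) :
    |(x + y) / 2| ^ p ≤ (|x| ^ p + |y| ^ p) / 2 := by
  have h0 : (0:ℝ) < p := lt_of_lt_of_le one_pos hp
  have h1 : |(x + y) / 2| ≤ (|x| + |y|) / 2 := by
    rw [abs_div, abs_two]
    linarith [abs_add_le x y]
  have h2 := (convexOn_rpow hp).2 (Set.mem_Ici.2 (abs_nonneg x)) (Set.mem_Ici.2 (abs_nonneg y))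
    (by norm_num : (0:ℝ) ≤ 1/2) (by norm_num : (0:ℝ) ≤ 1/2) (by norm_num)
  simp only [smul_eq_mul] at h2
  calc |(x + y) / 2| ^ p ≤ ((|x| + |y|) / 2) ^ p :=
        Real.rpow_le_rpow (abs_nonneg _) h1 h0.le
    _ = (1/2 * |x| + 1/2 * |y|) ^ p := by ring_nf
    _ ≤ 1/2 * |x| ^ p + 1/2 * |y| ^ p := h2
    _ = (|x| ^ p + |y| ^ p) / 2 := by ring

private lemma aux_mid_lt {p : ℝ} (hp : 1 < p) {x y : ℝ} (hxy : x ≠ y) :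
    |(x + y) / 2| ^ p < (|x| ^ p + |y| ^ p) / 2 := by
  have h0 : (0:ℝ) < p := lt_trans one_pos hp
  rcases eq_or_ne |x| |y| with he | hne
  · rcases abs_eq_abs.mp he with h | h
    · exact absurd h hxy
    · have hx0 : x ≠ 0 := by rintro rfl; simp at h; exact hxy h.symm
      have : (x + y) / 2 = 0 := by rw [h]; ring
      rw [this, abs_zero, Real.zero_rpow (ne_of_gt h0)]
      have : (0:ℝ) < |x| ^ p := Real.rpow_pos_of_pos (abs_pos.2 hx0) p
      rw [← he] at *
      linarith
  · have h1 : |(x + y) / 2| ≤ (|x| + |y|) / 2 := by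
      rw [abs_div, abs_two]
      linarith [abs_add_le x y]
    have h2 := (strictConvexOn_rpow hp).2 (Set.mem_Ici.2 (abs_nonneg x))
      (Set.mem_Ici.2 (abs_nonneg y)) hne (by norm_num : (0:ℝ) < 1/2)
      (by norm_num : (0:ℝ) < 1/2) (by norm_num)
    simp only [smul_eq_mul] at h2
    calc |(x + y) / 2| ^ p ≤ ((|x| + |y|) / 2) ^ p :=
          Real.rpow_le_rpow (abs_nonneg _) h1 h0.le
      _ = (1/2 * |x| + 1/2 * |y|) ^ p := by ring_nf
      _ < 1/2 * |x| ^ p + 1/2 * |y| ^ p := h2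
      _ = (|x| ^ p + |y| ^ p) / 2 := by ring

private lemma aux_fatou {Γ : Type*} (u : ℕ → Γ → ℝ≥0∞) :
    ∑' γ, liminf (fun n => u n γ) atTop ≤ liminf (fun n => ∑' γ, u n γ) atTop := by
  letI : MeasurableSpace Γ := ⊤
  haveI : MeasurableSingletonClass Γ := ⟨fun _ => trivial⟩
  simp_rw [← MeasureTheory.lintegral_count]
  exact MeasureTheory.lintegral_liminf_le fun n => measurable_from_top

private lemma aux_sq_le {a p R : ℝ} (ha : 0 ≤ a) (hp1 : 1 ≤ p) (hp2 : p ≤ 2) (hR : a ^ p ≤ R) :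
    a ^ (2:ℕ) ≤ max 1 R * a ^ p := by
  have hp0 : (0:ℝ) < p := lt_of_lt_of_le one_pos hp1
  rcases eq_or_lt_of_le ha with h0 | h0
  · rw [← h0]
    rw [Real.zero_rpow (ne_of_gt hp0)]
    norm_num
  rcases le_or_gt a 1 with h1 | h1
  · have : a ^ (2:ℝ) ≤ a ^ p := Real.rpow_le_rpow_of_exponent_ge h0 h1 hp2
    rw [← Real.rpow_natCast a 2]
    push_cast
    calc a ^ (2:ℝ) ≤ a ^ p := this
      _ = 1 * a ^ p := (one_mul _).symm
      _ ≤ max 1 R * a ^ p := by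
          apply mul_le_mul_of_nonneg_right (le_max_left _ _)
          exact Real.rpow_nonneg ha p
  · have hap1 : (1:ℝ) < a ^ p := Real.one_lt_rpow_iff_of_pos h0 |>.2 (Or.inl ⟨h1, hp0⟩)
    have hq0 : 0 ≤ (2 - p) / p := div_nonneg (by linarith) hp0.le
    have hq1 : (2 - p) / p ≤ 1 := by
      rw [div_le_one hp0]; linarith
    have key : a ^ (2 - p) ≤ max 1 R := by
      have e1 : a ^ (2 - p) = (a ^ p) ^ ((2 - p) / p) := by
        rw [← Real.rpow_mul ha]
        congr 1
        field_simp
      rw [e1]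
      calc (a ^ p) ^ ((2 - p) / p) ≤ (max 1 R) ^ ((2 - p) / p) :=
            Real.rpow_le_rpow (by positivity) (le_trans hR (le_max_right _ _)) hq0
        _ ≤ (max 1 R) ^ (1:ℝ) :=
            Real.rpow_le_rpow_of_exponent_le (le_max_left _ _) hq1
        _ = max 1 R := Real.rpow_one _
    have e2 : (a:ℝ) ^ (2:ℕ) = a ^ p * a ^ (2 - p) := by
      rw [← Real.rpow_natCast a 2, ← Real.rpow_add h0]
      norm_num
    rw [e2, mul_comm (max 1 R) _]
    apply mul_le_mul_of_nonneg_left key (Real.rpow_nonneg ha p)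

variable {H : Type*} [NormedAddCommGroup H] [InnerProductSpace ℝ H] [CompleteSpace H]
  {Γ : Type*}

private lemma aux_norm_sq (e : HilbertBasis Γ ℝ H) (f : H) :
    ‖f‖ ^ 2 = ∑' γ, ⟪f, e γ⟫ ^ 2 := by
  have h := e.tsum_inner_mul_inner f f
  rw [real_inner_self_eq_norm_sq] at h
  rw [← h]
  congr 1
  funext γ
  rw [real_inner_comm (e γ) f]
  ring

private lemma aux_summable_sq (e : HilbertBasis Γ ℝ H) (f : H) :
    Summable fun γ => ⟪f, e γ⟫ ^ 2 := by
  have h := e.summable_inner_mul_inner f f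
  refine h.congr fun γ => ?_
  rw [real_inner_comm (e γ) f]
  ring

private lemma aux_coord_ext (e : HilbertBasis Γ ℝ H) {g1 g2 : H}
    (h : ∀ γ, ⟪g1, e γ⟫ = ⟪g2, e γ⟫) : g1 = g2 := by
  apply e.repr.injective
  apply lp.ext
  funext γ
  rw [e.repr_apply_apply, e.repr_apply_apply]
  exact (real_inner_comm g1 (e γ)).trans ((h γ).trans (real_inner_comm (e γ) g2))

private lemma aux_exists_elem (e : HilbertBasis Γ ℝ H) (b : Γ → ℝ)
    (hb : Summable fun γ => b γ ^ 2) : ∃ g : H, ∀ γ, ⟪g, e γ⟫ = b γ := by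
  have hm : Memℓp b 2 := by
    apply memℓp_gen
    convert hb using 2 with γ
    rw [Real.norm_eq_abs, show ((2:ℝ≥0∞).toReal) = ((2:ℕ):ℝ) by norm_num,
      Real.rpow_natCast, sq_abs]
  refine ⟨e.repr.symm ⟨b, hm⟩, fun γ => ?_⟩
  have h := e.repr_apply_apply (e.repr.symm ⟨b, hm⟩) γ
  rw [LinearIsometryEquiv.apply_symm_apply] at h
  rw [real_inner_comm]
  exact h.symm

private lemma aux_weak (e : HilbertBasis Γ ℝ H) {B : ℝ} {f : ℕ → H}
    (hB : ∀ n, ‖f n‖ ≤ B) {g : H}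
    (hcoord : ∀ γ, Tendsto (fun n => ⟪f n, e γ⟫) atTop (𝓝 ⟪g, e γ⟫)) (y : H) :
    Tendsto (fun n => ⟪f n, y⟫) atTop (𝓝 ⟪g, y⟫) := by
  rw [Metric.tendsto_atTop]
  intro ε hε
  set C : ℝ := B + ‖g‖ + 1 with hC
  have hB0 : 0 ≤ B := (norm_nonneg (f 0)).trans (hB 0)
  have hC0 : 0 < C := by positivity
  have hr0 : 0 < ε / (2 * C) := by positivity
  have hsum := e.hasSum_repr y
  rw [HasSum] at hsum
  obtain ⟨s, hs⟩ := (hsum.eventually (Metric.ball_mem_nhds y hr0)).exists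
  set ys : H := ∑ γ ∈ s, ((e.repr y) γ : ℝ) • e γ with hys
  have hdys : ‖y - ys‖ ≤ ε / (2 * C) := by
    have h1 := Metric.mem_ball.mp hs
    rw [dist_eq_norm] at h1
    calc ‖y - ys‖ = ‖ys - y‖ := by rw [norm_sub_rev]
      _ ≤ ε / (2 * C) := le_of_lt h1
  have hinner : ∀ h : H, ⟪h, ys⟫ = ∑ γ ∈ s, ((e.repr y) γ : ℝ) * ⟪h, e γ⟫ := by
    intro h
    rw [hys, inner_sum]
    exact Finset.sum_congr rfl fun γ _ => real_inner_smul_right _ _ _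
  have htail : ∀ h : H, |⟪h, y⟫ - ⟪h, ys⟫| ≤ ‖h‖ * (ε / (2 * C)) := by
    intro h
    rw [← inner_sub_right]
    calc |⟪h, y - ys⟫| ≤ ‖h‖ * ‖y - ys‖ := abs_real_inner_le_norm h (y - ys)
      _ ≤ ‖h‖ * (ε / (2 * C)) :=
          mul_le_mul_of_nonneg_left hdys (norm_nonneg h)
  have hfin : Tendsto (fun n => ∑ γ ∈ s, ((e.repr y) γ : ℝ) * ⟪f n, e γ⟫) atTop
      (𝓝 (∑ γ ∈ s, ((e.repr y) γ : ℝ) * ⟪g, e γ⟫)) :=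
    tendsto_finset_sum s fun γ _ => (hcoord γ).const_mul _
  obtain ⟨N, hN⟩ := (Metric.tendsto_atTop.mp hfin) (ε / 2) (by positivity)
  refine ⟨N, fun n hn => ?_⟩
  have h2 := hN n hn
  rw [Real.dist_eq] at h2 ⊢
  rw [← hinner (f n), ← hinner g] at h2
  have t1 := htail (f n)
  have t3 := htail g
  have hfb : ‖f n‖ * (ε / (2 * C)) ≤ B * (ε / (2 * C)) :=
    mul_le_mul_of_nonneg_right (hB n) hr0.le
  have hCr : B * (ε / (2 * C)) + ‖g‖ * (ε / (2 * C)) ≤ ε / 2 := by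
    have : (B + ‖g‖) * (ε / (2 * C)) ≤ C * (ε / (2 * C)) :=
      mul_le_mul_of_nonneg_right (by rw [hC]; linarith) hr0.le
    have hCC : C * (ε / (2 * C)) = ε / 2 := by field_simp
    nlinarith
  calc |⟪f n, y⟫ - ⟪g, y⟫|
      ≤ |⟪f n, y⟫ - ⟪f n, ys⟫| + |⟪f n, ys⟫ - ⟪g, ys⟫| + |⟪g, ys⟫ - ⟪g, y⟫| := by
        have := abs_sub_le (⟪f n, y⟫ : ℝ) ⟪f n, ys⟫ ⟪g, y⟫
        have h4 := abs_sub_le (⟪f n, ys⟫ : ℝ) ⟪g, ys⟫ ⟪g, y⟫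
        linarith
    _ < ε := by
        have t3' : |⟪g, ys⟫ - ⟪g, y⟫| ≤ ‖g‖ * (ε / (2 * C)) := by
          rw [abs_sub_comm]; exact t3
        linarith

end AuxLemmas

/-- Existence and uniqueness of the `N`-minimal element of `S = {f : Kf = Kf₀}`, assuming
either `K` injective, or all `p γ > 1` together with the existence of some `f ∈ S` of finite
penalty. -/
theorem stmt_18
    {H H' : Type*} [NormedAddCommGroup H] [InnerProductSpace ℝ H] [CompleteSpace H]
    [NormedAddCommGroup H'] [InnerProductSpace ℝ H'] [CompleteSpace H']
    {Γ : Type*} [Countable Γ]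
    (e : HilbertBasis Γ ℝ H)
    (K : H →L[ℝ] H')
    (w : Γ → ℝ) (c : ℝ) (hc : 0 < c) (hw : ∀ γ, c ≤ w γ)
    (p : Γ → ℝ) (hp : ∀ γ, 1 ≤ p γ ∧ p γ ≤ 2)
    (Nf : H → ℝ≥0∞)
    (hNf : ∀ f, Nf f = ∑' γ, ENNReal.ofReal (w γ * |⟪f, e γ⟫| ^ (p γ)))
    (f0 : H)
    (hcase : Function.Injective K ∨
      ((∀ γ, 1 < p γ) ∧ ∃ f : H, K f = K f0 ∧ Nf f ≠ ⊤)) :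
    ∃! fd : H, K fd = K f0 ∧ ∀ f : H, K f = K f0 → Nf fd ≤ Nf f := by
  classical
  rcases hcase with hinj | ⟨hp1, fw, hfwK, hfwN⟩
  · exact ⟨f0, ⟨rfl, fun f hf => by rw [hinj hf]⟩, fun y hy => hinj hy.1⟩
  haveI : Nonempty {f : H // K f = K f0} := ⟨⟨f0, rfl⟩⟩
  set m : ℝ≥0∞ := ⨅ f : {f : H // K f = K f0}, Nf f.1 with hm
  have hmle : ∀ f : H, K f = K f0 → m ≤ Nf f := fun f hf => iInf_le (fun f : {f : H // K f = K f0} => Nf f.1) ⟨f, hf⟩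
  have hmtop : m ≠ ⊤ := by
    intro htop
    exact hfwN (top_le_iff.1 (htop ▸ hmle fw hfwK))
  -- a minimizing sequence
  have hch : ∀ n : ℕ, ∃ f : H, K f = K f0 ∧ Nf f < m + ((n:ℝ≥0∞) + 1)⁻¹ := by
    intro n
    have hlt : m < m + ((n:ℝ≥0∞) + 1)⁻¹ := by
      apply ENNReal.lt_add_right hmtop
      simp [ENNReal.inv_ne_zero]
    obtain ⟨⟨f, hf⟩, hflt⟩ := exists_lt_of_ciInf_lt hlt
    exact ⟨f, hf, hflt⟩
  choose fs hfsK hfsN using hch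
  have hNb : ∀ n, Nf (fs n) ≤ m + 1 := by
    intro n
    refine (hfsN n).le.trans (add_le_add_right ?_ m)
    rw [ENNReal.inv_le_one]
    exact le_add_self
  have hm1top : m + 1 ≠ ⊤ := by
    simp [hmtop]
  -- uniform bounds
  set M : ℝ := (m + 1).toReal with hM
  have hM0 : 0 ≤ M := ENNReal.toReal_nonneg
  set R : ℝ := M / c with hR
  have hR0 : 0 ≤ R := by positivity
  set B2 : ℝ := max 1 R * R with hB2
  have hB20 : 0 ≤ B2 := by positivity
  set B : ℝ := Real.sqrt B2 with hB
  -- key finite-sum bounds for any h with Nf h ≤ m + 1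
  have hsum_c : ∀ h : H, Nf h ≤ m + 1 → ∀ s : Finset Γ,
      ∑ γ ∈ s, c * |⟪h, e γ⟫| ^ p γ ≤ M := by
    intro h hh s
    have h1 : ∑ γ ∈ s, ENNReal.ofReal (c * |⟪h, e γ⟫| ^ p γ) ≤ m + 1 := by
      calc ∑ γ ∈ s, ENNReal.ofReal (c * |⟪h, e γ⟫| ^ p γ)
          ≤ ∑ γ ∈ s, ENNReal.ofReal (w γ * |⟪h, e γ⟫| ^ p γ) := by
            apply Finset.sum_le_sum
            intro γ _
            apply ENNReal.ofReal_le_ofReal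
            apply mul_le_mul_of_nonneg_right (hw γ)
            positivity
        _ ≤ ∑' γ, ENNReal.ofReal (w γ * |⟪h, e γ⟫| ^ p γ) := ENNReal.sum_le_tsum s
        _ = Nf h := (hNf h).symm
        _ ≤ m + 1 := hh
    rw [← ENNReal.ofReal_sum_of_nonneg (fun γ _ => by positivity)] at h1
    exact (ENNReal.ofReal_le_iff_le_toReal hm1top).1 h1
  have hkey : ∀ h : H, Nf h ≤ m + 1 → ∀ s : Finset Γ,
      ∑ γ ∈ s, ⟪h, e γ⟫ ^ 2 ≤ B2 := by
    intro h hh s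
    have hptw : ∀ γ, |⟪h, e γ⟫| ^ p γ ≤ R := by
      intro γ
      have h1 := hsum_c h hh {γ}
      rw [Finset.sum_singleton] at h1
      rw [hR, le_div_iff₀ hc]
      linarith
    have hsq : ∀ γ, ⟪h, e γ⟫ ^ 2 ≤ max 1 R * (|⟪h, e γ⟫| ^ p γ) := by
      intro γ
      have h1 := aux_sq_le (abs_nonneg (⟪h, e γ⟫ : ℝ)) (hp γ).1 (hp γ).2 (hptw γ)
      rwa [sq_abs] at h1
    have hps : ∑ γ ∈ s, |⟪h, e γ⟫| ^ p γ ≤ R := by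
      have h1 := hsum_c h hh s
      rw [← Finset.mul_sum] at h1
      rw [hR, le_div_iff₀ hc]
      linarith
    calc ∑ γ ∈ s, ⟪h, e γ⟫ ^ 2
        ≤ ∑ γ ∈ s, max 1 R * (|⟪h, e γ⟫| ^ p γ) := Finset.sum_le_sum fun γ _ => hsq γ
      _ = max 1 R * ∑ γ ∈ s, |⟪h, e γ⟫| ^ p γ := (Finset.mul_sum _ _ _).symm
      _ ≤ max 1 R * R := by
          apply mul_le_mul_of_nonneg_left hps
          exact le_trans zero_le_one (le_max_left _ _)
      _ = B2 := rfl
  have hnorm : ∀ h : H, Nf h ≤ m + 1 → ‖h‖ ≤ B := by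
    intro h hh
    have hn2 : ‖h‖ ^ 2 ≤ B2 := by
      rw [aux_norm_sq e h]
      exact Summable.tsum_le_of_sum_le (aux_summable_sq e h) (hkey h hh)
    calc ‖h‖ = Real.sqrt (‖h‖ ^ 2) := (Real.sqrt_sq (norm_nonneg h)).symm
      _ ≤ B := Real.sqrt_le_sqrt hn2
  -- coordinates live in a compact set
  have hBc : ∀ n γ, (⟪fs n, e γ⟫ : ℝ) ∈ Set.Icc (-B) B := by
    intro n γ
    have h1 : |(⟪fs n, e γ⟫ : ℝ)| ≤ B := by
      calc |(⟪fs n, e γ⟫ : ℝ)| ≤ ‖fs n‖ * ‖e γ‖ := abs_real_inner_le_norm _ _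
        _ = ‖fs n‖ := by rw [e.orthonormal.1 γ, mul_one]
        _ ≤ B := hnorm _ (hNb n)
    exact abs_le.1 h1
  have hcomp : IsCompact (Set.pi Set.univ fun _ : Γ => Set.Icc (-B) B) :=
    isCompact_univ_pi fun _ => isCompact_Icc
  obtain ⟨b, _, φ, hφ, htend⟩ := hcomp.tendsto_subseq
    (x := fun n => fun γ => (⟪fs n, e γ⟫ : ℝ))
    (fun n => Set.mem_univ_pi.2 fun γ => hBc n γ)
  have hcoordt : ∀ γ, Tendsto (fun n => (⟪fs (φ n), e γ⟫ : ℝ)) atTop (𝓝 (b γ)) :=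
    fun γ => (tendsto_pi_nhds.1 htend) γ
  -- the candidate minimizer
  have hbsq : ∀ s : Finset Γ, ∑ γ ∈ s, b γ ^ 2 ≤ B2 := by
    intro s
    have hlim : Tendsto (fun n => ∑ γ ∈ s, (⟪fs (φ n), e γ⟫ : ℝ) ^ 2) atTop
        (𝓝 (∑ γ ∈ s, b γ ^ 2)) :=
      tendsto_finset_sum s fun γ _ => (hcoordt γ).pow 2
    apply le_of_tendsto hlim
    filter_upwards with n
    exact hkey (fs (φ n)) (hNb (φ n)) s
  obtain ⟨g, hg⟩ := aux_exists_elem e b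
    (summable_of_sum_le (fun γ => sq_nonneg _) hbsq)
  have hcoordt' : ∀ γ, Tendsto (fun n => (⟪fs (φ n), e γ⟫ : ℝ)) atTop (𝓝 ⟪g, e γ⟫) := by
    intro γ
    rw [hg γ]
    exact hcoordt γ
  have hBφ : ∀ n, ‖fs (φ n)‖ ≤ B := fun n => hnorm _ (hNb (φ n))
  have hweak := aux_weak e hBφ hcoordt'
  -- g is feasible
  have hKg : K g = K f0 := by
    apply ext_inner_right ℝ
    intro v
    have h1 := hweak ((ContinuousLinearMap.adjoint K) v)
    have h2 : ∀ n, (⟪fs (φ n), (ContinuousLinearMap.adjoint K) v⟫ : ℝ) = ⟪K f0, v⟫ := by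
      intro n
      rw [ContinuousLinearMap.adjoint_inner_right, hfsK (φ n)]
    rw [show (fun n => (⟪fs (φ n), (ContinuousLinearMap.adjoint K) v⟫ : ℝ))
        = fun _ => (⟪K f0, v⟫ : ℝ) from funext h2] at h1
    have h3 := tendsto_nhds_unique h1 tendsto_const_nhds
    rw [ContinuousLinearMap.adjoint_inner_right] at h3
    exact h3
  -- Fatou: Nf g ≤ m
  have hNg : Nf g ≤ m := by
    have hterm : ∀ γ, Tendsto (fun n => ENNReal.ofReal (w γ * |⟪fs (φ n), e γ⟫| ^ p γ)) atTop
        (𝓝 (ENNReal.ofReal (w γ * |⟪g, e γ⟫| ^ p γ))) := by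
      intro γ
      apply (ENNReal.continuous_ofReal.tendsto _).comp
      apply Tendsto.const_mul
      have habs : Tendsto (fun n => |(⟪fs (φ n), e γ⟫ : ℝ)|) atTop (𝓝 |(⟪g, e γ⟫ : ℝ)|) :=
        (hcoordt' γ).abs
      have hcont := (Real.continuousAt_rpow_const |(⟪g, e γ⟫ : ℝ)| (p γ)
        (Or.inr (by linarith [(hp γ).1]))).tendsto
      exact hcont.comp habs
    have hliminfle : liminf (fun n => Nf (fs (φ n))) atTop ≤ m := by
      apply ENNReal.le_of_forall_pos_le_add
      intro ε hε _
      have hε' : (0:ℝ≥0∞) < ε := ENNReal.coe_pos.2 hε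
      have h0 : ∀ᶠ n : ℕ in atTop, ((n:ℝ≥0∞))⁻¹ < ε := by
        have := ENNReal.tendsto_inv_nat_nhds_zero
        exact this.eventually_lt_const hε'
      have hev : ∀ᶠ n in atTop, Nf (fs (φ n)) ≤ m + ε := by
        filter_upwards [h0] with n hn
        have hinv : ((φ n : ℝ≥0∞) + 1)⁻¹ ≤ ((n:ℝ≥0∞))⁻¹ := by
          apply ENNReal.inv_le_inv.2
          calc (n:ℝ≥0∞) ≤ (φ n : ℝ≥0∞) := by
                exact_mod_cast Nat.cast_le.2 hφ.le_apply
            _ ≤ (φ n : ℝ≥0∞) + 1 := le_add_self.trans_eq (add_comm _ _)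
          
        exact (hfsN (φ n)).le.trans (add_le_add_right (hinv.trans hn.le) m)
      exact liminf_le_of_frequently_le hev.frequently
    calc Nf g = ∑' γ, liminf (fun n => ENNReal.ofReal (w γ * |⟪fs (φ n), e γ⟫| ^ p γ)) atTop := by
          rw [hNf]
          congr 1
          funext γ
          exact ((hterm γ).liminf_eq).symm
      _ ≤ liminf (fun n => ∑' γ, ENNReal.ofReal (w γ * |⟪fs (φ n), e γ⟫| ^ p γ)) atTop :=
          aux_fatou _
      _ = liminf (fun n => Nf (fs (φ n))) atTop := by
          congr 1
          funext n
          exact (hNf _).symm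
      _ ≤ m := hliminfle
  have hgmin : ∀ f : H, K f = K f0 → Nf g ≤ Nf f := fun f hf => hNg.trans (hmle f hf)
  refine ⟨g, ⟨hKg, hgmin⟩, ?_⟩
  -- uniqueness
  rintro y ⟨hyK, hymin⟩
  by_contra hne
  have hNy : Nf y = Nf g := le_antisymm (hymin g hKg) (hgmin y hyK)
  have hNgtop : Nf g ≠ ⊤ := by
    intro htop
    exact hfwN (top_le_iff.1 (htop ▸ hgmin fw hfwK))
  obtain ⟨γ0, hγ0⟩ : ∃ γ0, (⟪y, e γ0⟫ : ℝ) ≠ ⟪g, e γ0⟫ := by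
    by_contra hall
    push_neg at hall
    exact hne (aux_coord_ext e hall)
  set h : H := (1/2 : ℝ) • (y + g) with hh
  have hKh : K h = K f0 := by
    rw [hh, map_smul, map_add, hyK, hKg]
    module
  have hcoordh : ∀ γ, (⟪h, e γ⟫ : ℝ) = ((⟪y, e γ⟫ : ℝ) + ⟪g, e γ⟫) / 2 := by
    intro γ
    rw [hh, real_inner_smul_left, inner_add_left]
    ring
  have hnn : ∀ (z : H) (γ : Γ), 0 ≤ w γ * |(⟪z, e γ⟫ : ℝ)| ^ p γ := fun z γ =>
    mul_nonneg (lt_of_lt_of_le hc (hw γ)).le (Real.rpow_nonneg (abs_nonneg _) _)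
  set X : Γ → ℝ≥0∞ := fun γ => ENNReal.ofReal (w γ * |⟪y, e γ⟫| ^ p γ) with hX
  set Y : Γ → ℝ≥0∞ := fun γ => ENNReal.ofReal (w γ * |⟪g, e γ⟫| ^ p γ) with hY
  set vr : Γ → ℝ := fun γ => (w γ * |⟪y, e γ⟫| ^ p γ + w γ * |⟪g, e γ⟫| ^ p γ) / 2 with hvr
  have hw0 : ∀ γ, 0 < w γ := fun γ => lt_of_lt_of_le hc (hw γ)
  have hle : ∀ γ, ENNReal.ofReal (w γ * |⟪h, e γ⟫| ^ p γ) ≤ ENNReal.ofReal (vr γ) := by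
    intro γ
    apply ENNReal.ofReal_le_ofReal
    rw [hcoordh γ]
    have h1 := aux_mid_le (hp γ).1 (⟪y, e γ⟫ : ℝ) (⟪g, e γ⟫ : ℝ)
    have h2 : w γ * |((⟪y, e γ⟫ : ℝ) + ⟪g, e γ⟫) / 2| ^ p γ
        ≤ w γ * ((|(⟪y, e γ⟫ : ℝ)| ^ p γ + |(⟪g, e γ⟫ : ℝ)| ^ p γ) / 2) :=
      mul_le_mul_of_nonneg_left h1 (hw0 γ).le
    rw [hvr]
    dsimp only
    linarith
  have hlt : ENNReal.ofReal (w γ0 * |⟪h, e γ0⟫| ^ p γ0) < ENNReal.ofReal (vr γ0) := by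
    have h1 := aux_mid_lt (hp1 γ0) hγ0
    have h2 : w γ0 * |((⟪y, e γ0⟫ : ℝ) + ⟪g, e γ0⟫) / 2| ^ p γ0
        < w γ0 * ((|(⟪y, e γ0⟫ : ℝ)| ^ p γ0 + |(⟪g, e γ0⟫ : ℝ)| ^ p γ0) / 2) :=
      mul_lt_mul_of_pos_left h1 (hw0 γ0)
    rw [hcoordh γ0, hvr]
    dsimp only
    refine (ENNReal.ofReal_lt_ofReal_iff ?_).2 (by linarith)
    have h3 : (0:ℝ) ≤ w γ0 * |((⟪y, e γ0⟫ : ℝ) + ⟪g, e γ0⟫) / 2| ^ p γ0 :=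
      mul_nonneg (lt_of_lt_of_le hc (hw γ0)).le (Real.rpow_nonneg (abs_nonneg _) _)
    linarith
  have htsum_v : ∑' γ, ENNReal.ofReal (vr γ) = Nf g := by
    have hpt : ∀ γ, ENNReal.ofReal (vr γ) = (X γ + Y γ) * 2⁻¹ := by
      intro γ
      rw [hvr, hX, hY]
      dsimp only
      rw [div_eq_mul_inv, ENNReal.ofReal_mul (add_nonneg (hnn y γ) (hnn g γ)),
        ENNReal.ofReal_add (hnn y γ) (hnn g γ), ENNReal.ofReal_inv_of_pos two_pos]
      norm_num
    simp_rw [hpt]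
    rw [ENNReal.tsum_mul_right, ENNReal.tsum_add]
    have hXy : ∑' γ, X γ = Nf y := (hNf y).symm
    have hYg : ∑' γ, Y γ = Nf g := (hNf g).symm
    rw [hXy, hYg, hNy, ← two_mul, mul_comm (2:ℝ≥0∞) (Nf g), mul_assoc,
      ENNReal.mul_inv_cancel two_ne_zero ENNReal.ofNat_ne_top, mul_one]
  have hvfin : (∑' γ, ENNReal.ofReal (vr γ)) ≠ ⊤ := by
    rw [htsum_v]; exact hNgtop
  have hfin2 : (∑' γ, ENNReal.ofReal (w γ * |⟪h, e γ⟫| ^ p γ)) ≠ ⊤ :=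
    ne_top_of_le_ne_top hvfin (ENNReal.tsum_le_tsum hle)
  have hstrict : Nf h < Nf g := by
    rw [hNf h]
    calc ∑' γ, ENNReal.ofReal (w γ * |⟪h, e γ⟫| ^ p γ)
        < ∑' γ, ENNReal.ofReal (vr γ) := ENNReal.tsum_lt_tsum hfin2 hle hlt
      _ = Nf g := htsum_v
  exact absurd (hgmin h hKh) (not_le.2 hstrict)
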